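/- Let F be a finite field and r, a, b, b', c, c' ∈ F with e := r·b + b' and d := e·a − r·c − c'. Then d = 0 if and only if r·(a·b − c) = c' − a·b'. Consequently, if c ≠ a·b, there is exactly one r ∈ F for which d = 0; hence for uniformly random r, the probability that the check d = 0 passes despite c ≠ a·b is at most 1/|F|. -/

import Mathlib

/-- With `e = r·b + b'` and `d = e·a − r·c − c'`, we have `d = 0` iff
`r·(a·b − c) = c' − a·b'`. Consequently, if `c ≠ a·b`, there is exactly one `r` making
the check pass, so for uniformly random `r` the probability that `d = 0` despite
`c ≠ a·b` is at most `1/|F|`. -/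
theorem stmt17 {F : Type*} [Field F] [Fintype F]
    (r a b b' c c' : F) :
    ((r * b + b') * a - r * c - c' = 0 ↔ r * (a * b - c) = c' - a * b') ∧
    (c ≠ a * b →
      (∃! r0 : F, (r0 * b + b') * a - r0 * c - c' = 0) ∧
      (({r0 : F | (r0 * b + b') * a - r0 * c - c' = 0} : Set F).ncard : ℚ) /
          (Fintype.card F : ℚ) ≤ 1 / (Fintype.card F : ℚ)) := by
  have key : ∀ s : F, ((s * b + b') * a - s * c - c' = 0 ↔ s * (a * b - c) = c' - a * b') := by
    intro s
    constructor <;> intro h <;> linear_combination h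
  refine ⟨key r, fun hne => ?_⟩
  have hd : a * b - c ≠ 0 := sub_ne_zero.mpr fun h => hne h.symm
  have huniq : ∃! r0 : F, (r0 * b + b') * a - r0 * c - c' = 0 := by
    refine ⟨(c' - a * b') / (a * b - c), ?_, ?_⟩
    · show _ = (0:F); rw [key]; field_simp
    · intro y hy
      rw [key] at hy
      field_simp [hy]
      exact hy
  refine ⟨huniq, ?_⟩
  obtain ⟨x0, hx0, hu⟩ := huniq
  have hset : ({r0 : F | (r0 * b + b') * a - r0 * c - c' = 0} : Set F) = {x0} := by
    ext y; simp only [Set.mem_setOf_eq, Set.mem_singleton_iff]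
    exact ⟨fun h => hu y h, fun h => h ▸ hx0⟩
  rw [hset, Set.ncard_singleton]
  norm_num
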